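/- Define C(α) = √α + (1/(2π)) ∑_{k≥1} k^(−2) ∫_0^α √y (1 − cos(2πk²/y) + sin(2πk²/y)) dy for α ≥ 0 (the series converges absolutely). Then there exists a constant M > 0 such that for all 0 < α ≤ 1: | C(α) − √α − (π/18) α^(3/2) | ≤ M α^(5/2). -/

import Mathlib

open Real

/-- The Conrey–Farmer–Soundararajan transition function
`C(α) = √α + (1/(2π)) ∑_{k≥1} k^(-2) ∫_0^α √y (1 - cos(2πk²/y) + sin(2πk²/y)) dy`. -/
noncomputable def CFS (α : ℝ) : ℝ :=
  Real.sqrt α + 1 / (2 * Real.pi) *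
    ∑' k : ℕ+, ((k : ℝ) ^ 2)⁻¹ *
      ∫ y in (0:ℝ)..α, Real.sqrt y *
        (1 - Real.cos (2 * Real.pi * (k : ℝ) ^ 2 / y)
           + Real.sin (2 * Real.pi * (k : ℝ) ^ 2 / y))

open MeasureTheory intervalIntegral Filter Asymptotics in
/-- Interval integrability from measurability and boundedness on `(0, α]`. -/
lemma cfs_II_of_bdd {f : ℝ → ℝ} {α C : ℝ} (hα : 0 ≤ α) (hm : Measurable f)
    (hb : ∀ y ∈ Set.Ioc (0:ℝ) α, |f y| ≤ C) :
    IntervalIntegrable f volume 0 α := by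
  rw [intervalIntegrable_iff]
  apply Measure.integrableOn_of_bounded (M := C)
  · rw [Set.uIoc_of_le hα, Real.volume_Ioc]
    exact ENNReal.ofReal_ne_top
  · exact hm.aestronglyMeasurable
  · rw [Set.uIoc_of_le hα]
    exact (ae_restrict_iff' measurableSet_Ioc).2
      (Filter.Eventually.of_forall (fun y hy => by simpa using hb y hy))

open MeasureTheory intervalIntegral Filter Asymptotics in
/-- Integration by parts bound for the oscillatory integral. -/
lemma cfs_osc_bound (c α : ℝ) (hc : 0 < c) (hα : 0 < α)
    (s t : ℝ → ℝ) (hst : ∀ x, HasDerivAt s (t x) x)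
    (hs : ∀ x, |s x| ≤ 1) (ht : ∀ x, |t x| ≤ 1)
    (hsc : Continuous s) (htc : Continuous t) :
    |∫ y in (0:ℝ)..α, Real.sqrt y * t (c / y)| ≤ 7/2 * (α^2 * Real.sqrt α) / c := by
  set F : ℝ → ℝ := fun y => y^2 * Real.sqrt y * s (c/y) / c with hF_def
  set f : ℝ → ℝ := fun y => 5/(2*c) * (y * Real.sqrt y * s (c/y)) - Real.sqrt y * t (c/y)
    with hf_def
  have hmes_div : Measurable (fun y : ℝ => c / y) := measurable_const.div measurable_id
  have hmes1 : Measurable (fun y : ℝ => y * Real.sqrt y * s (c/y)) :=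
    (measurable_id.mul Real.continuous_sqrt.measurable).mul
      (hsc.measurable.comp hmes_div)
  have hmes2 : Measurable (fun y : ℝ => Real.sqrt y * t (c/y)) :=
    Real.continuous_sqrt.measurable.mul (htc.measurable.comp hmes_div)
  have sqrt_le : ∀ y ∈ Set.Ioc (0:ℝ) α, Real.sqrt y ≤ Real.sqrt α :=
    fun y hy => Real.sqrt_le_sqrt hy.2
  have hb1 : ∀ y ∈ Set.Ioc (0:ℝ) α, |y * Real.sqrt y * s (c/y)| ≤ α * Real.sqrt α := by
    intro y hy
    rw [abs_mul, abs_mul]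
    have h1 : |y| ≤ α := by rw [abs_of_pos hy.1]; exact hy.2
    have h2 : |Real.sqrt y| ≤ Real.sqrt α := by
      rw [abs_of_nonneg (Real.sqrt_nonneg y)]; exact sqrt_le y hy
    calc |y| * |Real.sqrt y| * |s (c/y)| ≤ |y| * |Real.sqrt y| * 1 := by
          gcongr; exacts [hs _]
      _ = |y| * |Real.sqrt y| := by ring
      _ ≤ α * Real.sqrt α := by
          apply mul_le_mul h1 h2 (abs_nonneg _) hα.le
  have hb2 : ∀ y ∈ Set.Ioc (0:ℝ) α, |Real.sqrt y * t (c/y)| ≤ Real.sqrt α := by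
    intro y hy
    rw [abs_mul]
    calc |Real.sqrt y| * |t (c/y)| ≤ |Real.sqrt y| * 1 := by gcongr; exact ht _
      _ = |Real.sqrt y| := by ring
      _ ≤ Real.sqrt α := by
          rw [abs_of_nonneg (Real.sqrt_nonneg y)]; exact sqrt_le y hy
  have int1 : IntervalIntegrable (fun y => y * Real.sqrt y * s (c/y)) volume 0 α :=
    cfs_II_of_bdd hα.le hmes1 hb1
  have int2 : IntervalIntegrable (fun y => Real.sqrt y * t (c/y)) volume 0 α :=
    cfs_II_of_bdd hα.le hmes2 hb2
  have intf : IntervalIntegrable f volume 0 α := (int1.const_mul _).sub int2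
  -- derivative of F
  have hF : ∀ y ∈ Set.uIcc (0:ℝ) α, HasDerivAt F (f y) y := by
    intro y hy
    rw [Set.uIcc_of_le hα.le] at hy
    rcases eq_or_lt_of_le hy.1 with h0 | hpos
    · -- y = 0
      subst h0
      have hf0 : f 0 = 0 := by simp [hf_def]
      rw [hf0, hasDerivAt_iff_isLittleO]
      have hF0 : F 0 = 0 := by simp [hF_def]
      simp only [hF0, sub_zero, smul_zero, zero_sub, sub_neg_eq_add, add_zero, smul_eq_mul,
        mul_zero]
      have hO : F =O[nhds (0:ℝ)] (fun y => y^2) := by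
        apply IsBigO.of_bound (1/c)
        have hmem : Set.Icc (-1:ℝ) 1 ∈ nhds (0:ℝ) :=
          Icc_mem_nhds (by norm_num) (by norm_num)
        filter_upwards [hmem] with y hy
        have hsy : |Real.sqrt y| ≤ 1 := by
          rw [abs_of_nonneg (Real.sqrt_nonneg y)]
          calc Real.sqrt y ≤ Real.sqrt 1 := Real.sqrt_le_sqrt hy.2
            _ = 1 := Real.sqrt_one
        have : |F y| ≤ 1/c * |y^2| := by
          rw [hF_def]
          simp only [abs_div, abs_mul]
          rw [abs_of_pos hc]
          calc |y^2| * |Real.sqrt y| * |s (c/y)| / c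
              ≤ |y^2| * 1 * 1 / c := by
                gcongr <;> first | exact hsy | exact hs _
            _ = 1/c * |y^2| := by ring
        simpa [Real.norm_eq_abs] using this
      have hol : (fun y : ℝ => y^2) =o[nhds (0:ℝ)] (fun y => y) := by
        simpa using isLittleO_pow_pow (𝕜 := ℝ) (one_lt_two)
      exact hO.trans_isLittleO hol
    · -- y > 0
      have hy0 : y ≠ 0 := ne_of_gt hpos
      have hsy0 : Real.sqrt y ≠ 0 := by positivity
      have h1 : HasDerivAt (fun y : ℝ => y^2 * Real.sqrt y) (5/2 * (y * Real.sqrt y)) y := by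
        have := (hasDerivAt_pow 2 y).mul (Real.hasDerivAt_sqrt hy0)
        refine this.congr_deriv ?_
        have hss : Real.sqrt y * Real.sqrt y = y := Real.mul_self_sqrt hpos.le
        field_simp
        norm_num
        nlinarith [hss, Real.sqrt_nonneg y]
      have h3 : HasDerivAt (fun y : ℝ => c / y) (c * -(y^2)⁻¹) y := by
        simpa [div_eq_mul_inv] using (hasDerivAt_inv hy0).const_mul c
      have h4 : HasDerivAt (fun y : ℝ => s (c/y)) (t (c/y) * (c * -(y^2)⁻¹)) y :=
        (hst (c/y)).comp y h3
      have h5 := (h1.mul h4).div_const c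
      refine h5.congr_deriv ?_
      rw [hf_def]
      have hy2 : (y:ℝ)^2 ≠ 0 := pow_ne_zero 2 hy0
      field_simp
      ring
  -- FTC
  have hFTC : ∫ y in (0:ℝ)..α, f y = F α - F 0 :=
    integral_eq_sub_of_hasDerivAt hF intf
  have hsplit : ∫ y in (0:ℝ)..α, f y
      = 5/(2*c) * (∫ y in (0:ℝ)..α, y * Real.sqrt y * s (c/y))
        - ∫ y in (0:ℝ)..α, Real.sqrt y * t (c/y) := by
    rw [hf_def]
    rw [integral_sub (int1.const_mul _) int2, intervalIntegral.integral_const_mul]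
  have hF0 : F 0 = 0 := by simp [hF_def]
  have key : ∫ y in (0:ℝ)..α, Real.sqrt y * t (c/y)
      = 5/(2*c) * (∫ y in (0:ℝ)..α, y * Real.sqrt y * s (c/y)) - F α := by
    have := hFTC
    rw [hsplit, hF0, sub_zero] at this
    linarith
  rw [key]
  have hI1 : |∫ y in (0:ℝ)..α, y * Real.sqrt y * s (c/y)| ≤ α * Real.sqrt α * α := by
    have := norm_integral_le_of_norm_le_const (C := α * Real.sqrt α)
      (f := fun y => y * Real.sqrt y * s (c/y)) (a := (0:ℝ)) (b := α) ?_
    · simpa [abs_of_pos hα, Real.norm_eq_abs] using this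
    · intro x hx
      rw [Set.uIoc_of_le hα.le] at hx
      simp only [Real.norm_eq_abs]; exact hb1 x hx
  have hFα : |F α| ≤ α^2 * Real.sqrt α / c := by
    rw [hF_def]
    simp only [abs_div, abs_mul, abs_of_pos hc]
    have h1 : |α^2| = α^2 := abs_of_pos (by positivity)
    have h2 : |Real.sqrt α| = Real.sqrt α := abs_of_nonneg (Real.sqrt_nonneg α)
    rw [h1, h2]
    calc α^2 * Real.sqrt α * |s (c/α)| / c ≤ α^2 * Real.sqrt α * 1 / c := by
          gcongr; exact hs _
      _ = α^2 * Real.sqrt α / c := by ring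
  calc |5/(2*c) * (∫ y in (0:ℝ)..α, y * Real.sqrt y * s (c/y)) - F α|
      ≤ |5/(2*c)| * |∫ y in (0:ℝ)..α, y * Real.sqrt y * s (c/y)| + |F α| := by
        rw [← abs_mul]; exact abs_sub _ _
    _ ≤ 5/(2*c) * (α * Real.sqrt α * α) + α^2 * Real.sqrt α / c := by
        have habs : |5/(2*c)| = 5/(2*c) := abs_of_pos (by positivity)
        rw [habs]
        exact add_le_add (mul_le_mul_of_nonneg_left hI1 (by positivity)) hFα
    _ = 7/2 * (α^2 * Real.sqrt α) / c := by field_simp; ring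

open MeasureTheory intervalIntegral Filter Asymptotics in
/-- Per-`k` estimate of the inner integral. -/
lemma cfs_inner_est (α : ℝ) (hα : 0 < α) (k : ℕ+) :
    |(∫ y in (0:ℝ)..α, Real.sqrt y *
        (1 - Real.cos (2 * Real.pi * (k : ℝ) ^ 2 / y)
           + Real.sin (2 * Real.pi * (k : ℝ) ^ 2 / y)))
      - 2/3 * (α * Real.sqrt α)|
      ≤ 7 / (2 * Real.pi * (k : ℝ)^2) * (α^2 * Real.sqrt α) := by
  set c : ℝ := 2 * Real.pi * (k : ℝ)^2 with hc_def
  have hkpos : (0:ℝ) < (k : ℝ) := by exact_mod_cast k.pos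
  have hc : 0 < c := by positivity
  have hmes_div : Measurable (fun y : ℝ => c / y) := measurable_const.div measurable_id
  have intsqrt : IntervalIntegrable Real.sqrt volume 0 α :=
    Real.continuous_sqrt.intervalIntegrable 0 α
  have intcos : IntervalIntegrable (fun y => Real.sqrt y * Real.cos (c/y)) volume 0 α := by
    apply cfs_II_of_bdd hα.le
      (Real.continuous_sqrt.measurable.mul (Real.continuous_cos.measurable.comp hmes_div))
    intro y hy
    show |Real.sqrt y * Real.cos (c/y)| ≤ Real.sqrt α
    rw [abs_mul]
    calc |Real.sqrt y| * |Real.cos (c/y)| ≤ |Real.sqrt y| * 1 := by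
          gcongr; exact Real.abs_cos_le_one _
      _ = |Real.sqrt y| := by ring
      _ ≤ Real.sqrt α := by
          rw [abs_of_nonneg (Real.sqrt_nonneg y)]
          exact Real.sqrt_le_sqrt hy.2
  have intsin : IntervalIntegrable (fun y => Real.sqrt y * Real.sin (c/y)) volume 0 α := by
    apply cfs_II_of_bdd hα.le
      (Real.continuous_sqrt.measurable.mul (Real.continuous_sin.measurable.comp hmes_div))
    intro y hy
    show |Real.sqrt y * Real.sin (c/y)| ≤ Real.sqrt α
    rw [abs_mul]
    calc |Real.sqrt y| * |Real.sin (c/y)| ≤ |Real.sqrt y| * 1 := by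
          gcongr; exact Real.abs_sin_le_one _
      _ = |Real.sqrt y| := by ring
      _ ≤ Real.sqrt α := by
          rw [abs_of_nonneg (Real.sqrt_nonneg y)]
          exact Real.sqrt_le_sqrt hy.2
  have hcongr : (fun y => Real.sqrt y * (1 - Real.cos (c/y) + Real.sin (c/y)))
      = fun y => (Real.sqrt y - Real.sqrt y * Real.cos (c/y)) + Real.sqrt y * Real.sin (c/y) := by
    funext y; ring
  have hsplit : (∫ y in (0:ℝ)..α, Real.sqrt y * (1 - Real.cos (c/y) + Real.sin (c/y)))
      = (∫ y in (0:ℝ)..α, Real.sqrt y)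
        - (∫ y in (0:ℝ)..α, Real.sqrt y * Real.cos (c/y))
        + ∫ y in (0:ℝ)..α, Real.sqrt y * Real.sin (c/y) := by
    rw [hcongr, integral_add (intsqrt.sub intcos) intsin, integral_sub intsqrt intcos]
  have hsq : (∫ y in (0:ℝ)..α, Real.sqrt y) = 2/3 * (α * Real.sqrt α) := by
    have h1 : (∫ y in (0:ℝ)..α, Real.sqrt y) = ∫ y in (0:ℝ)..α, y ^ ((1:ℝ)/2) :=
      integral_congr (fun y _ => Real.sqrt_eq_rpow y)
    rw [h1, integral_rpow (Or.inl (by norm_num))]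
    have h2 : (0:ℝ) ^ ((1:ℝ)/2 + 1) = 0 := by
      rw [Real.zero_rpow]; norm_num
    rw [h2, sub_zero]
    have h3 : α ^ ((1:ℝ)/2 + 1) = α * Real.sqrt α := by
      rw [show (1:ℝ)/2 + 1 = 1 + 1/2 by ring, Real.rpow_add hα, Real.rpow_one,
        ← Real.sqrt_eq_rpow]
    rw [h3]
    ring
  have hcos : |∫ y in (0:ℝ)..α, Real.sqrt y * Real.cos (c/y)| ≤ 7/2 * (α^2 * Real.sqrt α) / c :=
    cfs_osc_bound c α hc hα Real.sin Real.cos Real.hasDerivAt_sin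
      Real.abs_sin_le_one Real.abs_cos_le_one Real.continuous_sin Real.continuous_cos
  have hsin : |∫ y in (0:ℝ)..α, Real.sqrt y * Real.sin (c/y)| ≤ 7/2 * (α^2 * Real.sqrt α) / c := by
    apply cfs_osc_bound c α hc hα (fun x => -Real.cos x) Real.sin
    · intro x
      simpa using (Real.hasDerivAt_cos x).fun_neg
    · intro x; simpa using Real.abs_cos_le_one x
    · exact Real.abs_sin_le_one
    · exact Real.continuous_cos.neg
    · exact Real.continuous_sin
  rw [hsplit, hsq]
  have : |2/3 * (α * Real.sqrt α) - (∫ y in (0:ℝ)..α, Real.sqrt y * Real.cos (c/y))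
      + (∫ y in (0:ℝ)..α, Real.sqrt y * Real.sin (c/y)) - 2/3 * (α * Real.sqrt α)|
      ≤ 7/2 * (α^2 * Real.sqrt α) / c + 7/2 * (α^2 * Real.sqrt α) / c := by
    have heq : 2/3 * (α * Real.sqrt α) - (∫ y in (0:ℝ)..α, Real.sqrt y * Real.cos (c/y))
        + (∫ y in (0:ℝ)..α, Real.sqrt y * Real.sin (c/y)) - 2/3 * (α * Real.sqrt α)
        = (∫ y in (0:ℝ)..α, Real.sqrt y * Real.sin (c/y))
          - (∫ y in (0:ℝ)..α, Real.sqrt y * Real.cos (c/y)) := by ring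
    rw [heq]
    exact (abs_sub _ _).trans (add_le_add hsin hcos)
  refine this.trans (le_of_eq ?_)
  rw [hc_def]
  field_simp
  ring

open MeasureTheory Filter Asymptotics in
/-- Basel sum over `ℕ+`. -/
lemma cfs_basel : HasSum (fun k : ℕ+ => ((k : ℝ)^2)⁻¹) (Real.pi^2 / 6) := by
  have h0 := hasSum_zeta_two
  have hinj : Function.Injective (fun k : ℕ+ => (k : ℕ)) := fun a b h => PNat.coe_injective h
  have hsupp : ∀ n ∉ Set.range (fun k : ℕ+ => (k : ℕ)), (1:ℝ) / (n:ℝ)^2 = 0 := by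
    intro n hn
    have : n = 0 := by
      by_contra h
      exact hn ⟨⟨n, Nat.pos_of_ne_zero h⟩, rfl⟩
    subst this
    simp
  have := (Function.Injective.hasSum_iff hinj hsupp).2 h0
  simpa [one_div, Function.comp_def] using this

/-- as `α → 0⁺`, `C(α) = √α + (π/18) α^(3/2) + O(α^(5/2))`. -/
theorem CFS_at_zero :
    ∃ M > (0:ℝ), ∀ α : ℝ, 0 < α → α ≤ 1 →
      |CFS α - Real.sqrt α - Real.pi / 18 * α ^ ((3:ℝ)/2)| ≤ M * α ^ ((5:ℝ)/2) := by
  refine ⟨1, one_pos, fun α hα hα1 => ?_⟩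
  set A : ℝ := α * Real.sqrt α with hA_def
  set B : ℝ := α^2 * Real.sqrt α with hB_def
  have hApos : 0 < A := by positivity
  have hBpos : 0 < B := by positivity
  -- rpow identities
  have h32 : α ^ ((3:ℝ)/2) = A := by
    rw [hA_def, show (3:ℝ)/2 = 1 + 1/2 by ring, Real.rpow_add hα, Real.rpow_one,
      ← Real.sqrt_eq_rpow]
  have h52 : α ^ ((5:ℝ)/2) = B := by
    rw [hB_def, show (5:ℝ)/2 = 2 + 1/2 by ring, Real.rpow_add hα, ← Real.sqrt_eq_rpow,
      Real.rpow_two]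
  set I : ℕ+ → ℝ := fun k => ∫ y in (0:ℝ)..α, Real.sqrt y *
        (1 - Real.cos (2 * Real.pi * (k : ℝ) ^ 2 / y)
           + Real.sin (2 * Real.pi * (k : ℝ) ^ 2 / y)) with hI_def
  set e : ℕ+ → ℝ := fun k => ((k : ℝ)^2)⁻¹ * (I k - 2/3 * A) with he_def
  have hkpos : ∀ k : ℕ+, (0:ℝ) < (k : ℝ) := fun k => by exact_mod_cast k.pos
  have hk1 : ∀ k : ℕ+, (1:ℝ) ≤ (k : ℝ) := fun k => by exact_mod_cast k.one_le
  have hebound : ∀ k : ℕ+, |e k| ≤ (7/(2*Real.pi) * B) * ((k : ℝ)^2)⁻¹ := by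
    intro k
    have h1 := cfs_inner_est α hα k
    rw [he_def]
    simp only [abs_mul]
    have hk2 : (0:ℝ) < (k:ℝ)^2 := by positivity
    have hinv : |((k : ℝ)^2)⁻¹| = ((k : ℝ)^2)⁻¹ := abs_of_pos (by positivity)
    rw [hinv]
    have hinv1 : ((k : ℝ)^2)⁻¹ ≤ 1 := by
      rw [inv_le_one_iff₀]
      right
      nlinarith [hk1 k]
    calc ((k : ℝ)^2)⁻¹ * |I k - 2/3 * A|
        ≤ ((k : ℝ)^2)⁻¹ * (7 / (2 * Real.pi * (k : ℝ)^2) * B) := by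
          exact mul_le_mul_of_nonneg_left h1 (by positivity)
      _ = (7/(2*Real.pi) * B) * (((k : ℝ)^2)⁻¹ * ((k : ℝ)^2)⁻¹) := by
          field_simp
      _ ≤ (7/(2*Real.pi) * B) * (1 * ((k : ℝ)^2)⁻¹) := by
          have h7 : 0 < 7/(2*Real.pi) * B := by positivity
          gcongr
      _ = (7/(2*Real.pi) * B) * ((k : ℝ)^2)⁻¹ := by ring
  have hBaselSummable : Summable (fun k : ℕ+ => ((k : ℝ)^2)⁻¹) := cfs_basel.summable
  have hboundSummable : Summable (fun k : ℕ+ => (7/(2*Real.pi) * B) * ((k : ℝ)^2)⁻¹) :=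
    hBaselSummable.mul_left _
  have heabs : Summable (fun k : ℕ+ => |e k|) :=
    Summable.of_nonneg_of_le (fun k => abs_nonneg _) hebound hboundSummable
  have hesum : Summable e := heabs.of_abs
  have hmainsum : HasSum (fun k : ℕ+ => ((k : ℝ)^2)⁻¹ * (2/3 * A))
      (Real.pi^2/6 * (2/3 * A)) := cfs_basel.mul_right _
  have hgsum : (∑' k : ℕ+, ((k : ℝ)^2)⁻¹ * I k)
      = Real.pi^2/6 * (2/3 * A) + ∑' k : ℕ+, e k := by
    have hg : (fun k : ℕ+ => ((k : ℝ)^2)⁻¹ * I k)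
        = fun k : ℕ+ => ((k : ℝ)^2)⁻¹ * (2/3 * A) + e k := by
      funext k
      rw [he_def]
      ring
    rw [hg, Summable.tsum_add hmainsum.summable hesum, hmainsum.tsum_eq]
  have hetsum : |∑' k : ℕ+, e k| ≤ 7/(2*Real.pi) * B * (Real.pi^2/6) := by
    calc |∑' k : ℕ+, e k| ≤ ∑' k : ℕ+, |e k| := by
          simpa [Real.norm_eq_abs] using norm_tsum_le_tsum_norm (f := e) (by simpa using heabs)
      _ ≤ ∑' k : ℕ+, (7/(2*Real.pi) * B) * ((k : ℝ)^2)⁻¹ :=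
          Summable.tsum_le_tsum hebound heabs hboundSummable
      _ = (7/(2*Real.pi) * B) * ∑' k : ℕ+, ((k : ℝ)^2)⁻¹ := tsum_mul_left
      _ = 7/(2*Real.pi) * B * (Real.pi^2/6) := by rw [cfs_basel.tsum_eq]
  have hπ : (0:ℝ) < Real.pi := Real.pi_pos
  have hmain : CFS α - Real.sqrt α - Real.pi / 18 * α ^ ((3:ℝ)/2)
      = 1/(2*Real.pi) * ∑' k : ℕ+, e k := by
    rw [CFS, h32]
    have : (∑' k : ℕ+, ((k : ℝ)^2)⁻¹ *
        ∫ y in (0:ℝ)..α, Real.sqrt y *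
          (1 - Real.cos (2 * Real.pi * (k : ℝ) ^ 2 / y)
             + Real.sin (2 * Real.pi * (k : ℝ) ^ 2 / y)))
        = Real.pi^2/6 * (2/3 * A) + ∑' k : ℕ+, e k := hgsum
    rw [this]
    field_simp
    ring
  rw [hmain, h52]
  calc |1/(2*Real.pi) * ∑' k : ℕ+, e k| = 1/(2*Real.pi) * |∑' k : ℕ+, e k| := by
        rw [abs_mul, abs_of_pos (by positivity)]
    _ ≤ 1/(2*Real.pi) * (7/(2*Real.pi) * B * (Real.pi^2/6)) := by
        gcongr
    _ = 7/24 * B := by field_simp; ring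
    _ ≤ 1 * B := by nlinarith [hBpos]
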